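/- Let $b_1, \dots, b_n \in \mathbb{C}$, $T(\alpha) := \sum_{m \leq n} b_m e(\alpha m)$, $N(h,t) := \sum_{m \leq n, m \equiv h \pmod t} b_m$, and $f_h(d) := \sum_{t \mid d} \mu(t)(d/t) N(h, d/t)$. Then for every positive integer $d$, $\frac{1}{d} \sum_{h=0}^{d-1} |f_h(d)|^2 = \sum_{a < d, (a,d)=1} |T(a/d)|^2$. -/

import Mathlib

open Finset



/-- `N(h,t) = ∑_{m ≤ n, m ≡ h (t)} b_m`. -/
noncomputable def Ncount (b : ℕ → ℂ) (n : ℕ) (h : ℤ) (t : ℕ) : ℂ :=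
  ∑ m ∈ (Finset.Icc 1 n).filter (fun (m : ℕ) => (m : ℤ) % (t : ℤ) = h % (t : ℤ)), b m

/-- `f_h(d) = ∑_{t ∣ d} μ(t) (d/t) N(h, d/t)`. -/
noncomputable def ffun (b : ℕ → ℂ) (n : ℕ) (h : ℤ) (d : ℕ) : ℂ :=
  ∑ t ∈ d.divisors,
    (ArithmeticFunction.moebius t : ℂ) * ((d / t : ℕ) : ℂ) * Ncount b n h (d / t)

/-- `T(α) = ∑_{m ≤ n} b_m e(αm)`. -/
noncomputable def Tfun (b : ℕ → ℂ) (n : ℕ) (α : ℝ) : ℂ :=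
  ∑ m ∈ Finset.Icc 1 n, b m * Complex.exp (2 * Real.pi * Complex.I * (α * m))



noncomputable def ee (d : ℕ) (k : ℤ) : ℂ := Complex.exp (2 * Real.pi * Complex.I * ((k : ℂ) / (d : ℂ)))

lemma ee_add (d : ℕ) (j k : ℤ) : ee d (j + k) = ee d j * ee d k := by
  rw [ee, ee, ee, ← Complex.exp_add]; congr 1; push_cast; ring

lemma ee_of_dvd {d : ℕ} (hd : d ≠ 0) {k : ℤ} (h : (d : ℤ) ∣ k) : ee d k = 1 := by
  obtain ⟨m, rfl⟩ := h
  rw [ee]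
  have hd' : (d : ℂ) ≠ 0 := Nat.cast_ne_zero.mpr hd
  have h1 : 2 * (Real.pi : ℂ) * Complex.I * (((d : ℤ) * m : ℤ) : ℂ) / (d : ℂ)
      = (m : ℂ) * (2 * Real.pi * Complex.I) := by
    push_cast; field_simp
  rw [← mul_div_assoc, h1, Complex.exp_int_mul_two_pi_mul_I]

lemma ee_eq_one_iff {d : ℕ} (hd : d ≠ 0) {k : ℤ} : ee d k = 1 ↔ (d : ℤ) ∣ k := by
  constructor
  · intro h
    rw [ee, Complex.exp_eq_one_iff] at h
    obtain ⟨m, hm⟩ := h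
    have hd' : (d : ℂ) ≠ 0 := Nat.cast_ne_zero.mpr hd
    have hne := Complex.two_pi_I_ne_zero
    have h2 : (k : ℂ) = (m : ℂ) * d := by
      field_simp at hm
      have := mul_left_cancel₀ hne (by rw [hm]; ring : 2 * (Real.pi:ℂ) * Complex.I * (k:ℂ)
        = 2 * (Real.pi:ℂ) * Complex.I * ((m:ℂ) * d))
      exact this
    have h3 : k = m * d := by exact_mod_cast h2
    exact ⟨m, by rw [h3, mul_comm]⟩
  · exact ee_of_dvd hd

lemma ee_pow (d : ℕ) (k : ℤ) (m : ℕ) : ee d k ^ m = ee d (k * m) := by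
  rw [ee, ee, ← Complex.exp_nat_mul]; congr 1; push_cast; ring

lemma ortho {d : ℕ} (hd : d ≠ 0) (k : ℤ) :
    ∑ h ∈ range d, ee d (k * h) = if (d : ℤ) ∣ k then (d : ℂ) else 0 := by
  have hrw : ∀ h : ℕ, ee d (k * h) = ee d k ^ h := fun h => (ee_pow d k h).symm
  simp_rw [hrw]
  split_ifs with H
  · rw [ee_of_dvd hd H]; simp
  · rw [geom_sum_eq (fun h => H ((ee_eq_one_iff hd).mp h)) d, ee_pow,
      ee_of_dvd hd ⟨k, mul_comm k d⟩, sub_self, zero_div]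

lemma ee_def (d : ℕ) (k : ℤ) : ee d k = Complex.exp (2 * Real.pi * Complex.I * ((k : ℂ) / (d : ℂ))) := rfl

lemma ee_mul_left {d t : ℕ} (ht : t ∣ d) (ht0 : t ≠ 0) (x : ℤ) :
    ee d ((t : ℤ) * x) = ee (d / t) x := by
  rcases eq_or_ne d 0 with rfl | hd
  · simp [ee_def]
  · obtain ⟨c, rfl⟩ := ht
    have ht' : (t : ℂ) ≠ 0 := Nat.cast_ne_zero.mpr ht0
    have hc : c ≠ 0 := by rintro rfl; simp at hd
    have hc' : (c : ℂ) ≠ 0 := Nat.cast_ne_zero.mpr hc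
    rw [ee_def, ee_def, Nat.mul_div_cancel_left c (Nat.pos_of_ne_zero ht0)]
    congr 1
    push_cast
    field_simp

lemma moebius_ind (m : ℕ) :
    ∑ t ∈ m.divisors, ((ArithmeticFunction.moebius t : ℤ) : ℂ) = if m = 1 then 1 else 0 := by
  have := ArithmeticFunction.coe_mul_zeta_apply
    (f := (ArithmeticFunction.moebius : ArithmeticFunction ℤ)) (x := m)
  rw [ArithmeticFunction.moebius_mul_coe_zeta] at this
  rw [ArithmeticFunction.one_apply] at this
  have h2 : ((∑ i ∈ m.divisors, ArithmeticFunction.moebius i : ℤ) : ℂ)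
      = ((if m = 1 then 1 else 0 : ℤ) : ℂ) := by rw [← this]
  push_cast at h2
  rw [h2]

lemma filter_range_dvd {d t : ℕ} (ht : t ∣ d) (ht0 : t ≠ 0) :
    (range d).filter (fun a => t ∣ a) = (range (d / t)).image (fun j => t * j) := by
  ext a
  simp only [mem_filter, mem_range, mem_image]
  constructor
  · rintro ⟨h1, c, rfl⟩
    exact ⟨c, by rw [← Nat.lt_div_iff_mul_lt' ht] at h1; exact h1, rfl⟩
  · rintro ⟨j, hj, rfl⟩
    exact ⟨(Nat.lt_div_iff_mul_lt' ht j).mp hj, j, rfl⟩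

lemma sum_range_dvd {d t : ℕ} (ht : t ∣ d) (ht0 : t ≠ 0) (f : ℕ → ℂ) :
    ∑ a ∈ (range d).filter (fun a => t ∣ a), f a = ∑ j ∈ range (d / t), f (t * j) := by
  rw [filter_range_dvd ht ht0, Finset.sum_image]
  intro x _ y _ h
  exact Nat.eq_of_mul_eq_mul_left (Nat.pos_of_ne_zero ht0) h

lemma gcd_divisors {a d : ℕ} (hd : d ≠ 0) :
    (Nat.gcd a d).divisors = d.divisors.filter (fun t => t ∣ a) := by
  ext t
  simp only [Nat.mem_divisors, mem_filter]
  constructor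
  · rintro ⟨h1, _⟩
    exact ⟨⟨(Nat.dvd_gcd_iff.mp h1).2, hd⟩, (Nat.dvd_gcd_iff.mp h1).1⟩
  · rintro ⟨⟨h1, _⟩, h2⟩
    exact ⟨Nat.dvd_gcd h2 h1, fun h => hd ((Nat.gcd_eq_zero_iff.mp h).2)⟩

lemma ramanujan {d : ℕ} (hd : d ≠ 0) (k : ℤ) :
    ∑ a ∈ (range d).filter (fun a => Nat.Coprime a d), ee d ((a : ℤ) * k)
    = ∑ t ∈ d.divisors, (ArithmeticFunction.moebius t : ℂ) *
        (if ((d / t : ℕ) : ℤ) ∣ k then ((d / t : ℕ) : ℂ) else 0) := by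
  rw [sum_filter]
  have key : ∀ a ∈ range d, (if Nat.Coprime a d then ee d ((a:ℤ) * k) else 0)
      = ∑ t ∈ d.divisors, (if t ∣ a then (ArithmeticFunction.moebius t : ℂ) else 0)
          * ee d ((a:ℤ) * k) := by
    intro a _
    rw [← sum_mul, ← sum_filter, ← gcd_divisors hd, moebius_ind]
    unfold Nat.Coprime
    split_ifs <;> simp
  rw [Finset.sum_congr rfl key, Finset.sum_comm]
  refine Finset.sum_congr rfl fun t ht => ?_
  obtain ⟨htd, -⟩ := Nat.mem_divisors.mp ht
  have ht0 : t ≠ 0 := by rintro rfl; exact hd (Nat.eq_zero_of_zero_dvd htd)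
  simp_rw [ite_mul, zero_mul, ← Finset.sum_filter]
  rw [sum_range_dvd htd ht0, ← Finset.mul_sum]
  congr 1
  have : ∀ j ∈ range (d / t), ee d (((t * j : ℕ) : ℤ) * k) = ee (d / t) (k * j) := by
    intro j _
    rw [show ((t * j : ℕ) : ℤ) * k = (t : ℤ) * (k * j) by push_cast; ring, ee_mul_left htd ht0]
  rw [Finset.sum_congr rfl this, ortho (by
    intro h; exact hd (by rw [← Nat.div_mul_cancel htd, h, zero_mul]) ) k]

lemma ee_conj (d : ℕ) (k : ℤ) : (starRingEnd ℂ) (ee d k) = ee d (-k) := by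
  rw [ee_def, ee_def, ← Complex.exp_conj]
  congr 1
  simp [map_mul, map_div₀, Complex.conj_I, map_ofNat]
  ring

lemma Ncount_eq (b : ℕ → ℂ) (n : ℕ) (h : ℤ) (t : ℕ) :
    Ncount b n h t = ∑ m ∈ Finset.Icc 1 n, if (t : ℤ) ∣ ((m : ℤ) - h) then b m else 0 := by
  rw [Ncount, sum_filter]
  refine sum_congr rfl fun m _ => ?_
  congr 1
  rw [Int.emod_eq_emod_iff_emod_sub_eq_zero, eq_iff_iff, ← Int.dvd_iff_emod_eq_zero]

lemma Tfun_eq {d : ℕ} (b : ℕ → ℂ) (n : ℕ) (a : ℕ) :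
    Tfun b n ((a : ℝ) / (d : ℝ)) = ∑ m ∈ Finset.Icc 1 n, b m * ee d ((a : ℤ) * m) := by
  rw [Tfun]
  refine sum_congr rfl fun m _ => ?_
  rw [ee_def]
  congr 2
  push_cast
  ring

lemma ffun_eq {d : ℕ} (hd : d ≠ 0) (b : ℕ → ℂ) (n : ℕ) (h : ℤ) :
    ffun b n h d = ∑ a ∈ (range d).filter (fun a => Nat.Coprime a d),
      Tfun b n ((a : ℝ) / (d : ℝ)) * ee d (-((a : ℤ) * h)) := by
  have step1 : ffun b n h d = ∑ m ∈ Finset.Icc 1 n, b m *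
      ∑ t ∈ d.divisors, (ArithmeticFunction.moebius t : ℂ) *
        (if ((d / t : ℕ) : ℤ) ∣ ((m : ℤ) - h) then ((d / t : ℕ) : ℂ) else 0) := by
    rw [ffun]
    simp_rw [Ncount_eq, Finset.mul_sum]
    rw [Finset.sum_comm]
    refine sum_congr rfl fun m _ => sum_congr rfl fun t _ => ?_
    split_ifs <;> ring
  rw [step1]
  have step2 : ∀ m ∈ Finset.Icc 1 n,
      b m * ∑ t ∈ d.divisors, (ArithmeticFunction.moebius t : ℂ) *
        (if ((d / t : ℕ) : ℤ) ∣ ((m : ℤ) - h) then ((d / t : ℕ) : ℂ) else 0)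
      = ∑ a ∈ (range d).filter (fun a => Nat.Coprime a d), b m * ee d ((a : ℤ) * ((m : ℤ) - h)) := by
    intro m _
    rw [← ramanujan hd ((m : ℤ) - h), Finset.mul_sum]
  rw [sum_congr rfl step2, Finset.sum_comm]
  refine sum_congr rfl fun a _ => ?_
  rw [Tfun_eq, Finset.sum_mul]
  refine sum_congr rfl fun m _ => ?_
  rw [mul_assoc, ← ee_add]
  congr 2
  ring

lemma parseval {d : ℕ} (hd : d ≠ 0) (A : Finset ℕ) (hA : A ⊆ range d) (g : ℕ → ℂ) :
    ∑ h ∈ range d, ((∑ a ∈ A, g a * ee d (-((a : ℤ) * h))) *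
      (starRingEnd ℂ) (∑ a ∈ A, g a * ee d (-((a : ℤ) * h))))
    = (d : ℂ) * ∑ a ∈ A, g a * (starRingEnd ℂ) (g a) := by
  have expand : ∀ h : ℕ, (∑ a ∈ A, g a * ee d (-((a : ℤ) * h))) *
      (starRingEnd ℂ) (∑ a ∈ A, g a * ee d (-((a : ℤ) * h)))
      = ∑ a ∈ A, ∑ a' ∈ A, g a * (starRingEnd ℂ) (g a') * ee d (((a' : ℤ) - a) * h) := by
    intro h
    rw [map_sum, Finset.sum_mul_sum]
    refine sum_congr rfl fun a _ => sum_congr rfl fun a' _ => ?_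
    rw [map_mul, ee_conj, neg_neg]
    rw [show g a * ee d (-((a : ℤ) * h)) * ((starRingEnd ℂ) (g a') * ee d ((a' : ℤ) * h))
        = g a * (starRingEnd ℂ) (g a') * (ee d (-((a : ℤ) * h)) * ee d ((a' : ℤ) * h)) by ring,
      ← ee_add]
    congr 2
    ring
  rw [sum_congr rfl (fun h _ => expand h), Finset.sum_comm, Finset.mul_sum]
  refine sum_congr rfl fun a ha => ?_
  rw [Finset.sum_comm]
  have inner : ∀ a' ∈ A, ∑ h ∈ range d, g a * (starRingEnd ℂ) (g a') * ee d (((a' : ℤ) - a) * h)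
      = if a' = a then g a * (starRingEnd ℂ) (g a) * d else 0 := by
    intro a' ha'
    rw [← Finset.mul_sum, ortho hd]
    have h1 := mem_range.mp (hA ha)
    have h2 := mem_range.mp (hA ha')
    have hiff : ((d : ℤ) ∣ ((a' : ℤ) - a)) ↔ a' = a := by
      constructor
      · intro hdvd
        have := Int.eq_zero_of_abs_lt_dvd hdvd (by
          rw [abs_sub_lt_iff]; constructor <;> push_cast <;> omega)
        omega
      · rintro rfl; simp
    split_ifs with hc1 hc2 hc2
    · subst hc2; ring
    · exact absurd (hiff.mp hc1) hc2
    · exact absurd (hiff.mpr hc2) hc1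
    · ring
  rw [sum_congr rfl inner, Finset.sum_ite_eq' A a, if_pos ha]
  ring

theorem stmt13 (b : ℕ → ℂ) (n : ℕ) (hn : 1 ≤ n) (d : ℕ) (hd : 1 ≤ d) :
    (1 / (d : ℝ)) * ∑ h ∈ Finset.range d, ‖ffun b n (h : ℤ) d‖ ^ 2 =
      ∑ a ∈ (Finset.range d).filter (fun a => Nat.Coprime a d),
        ‖Tfun b n ((a : ℝ) / (d : ℝ))‖ ^ 2 := by

  have hd0 : d ≠ 0 := by omega
  have hdC : (d : ℝ) ≠ 0 := Nat.cast_ne_zero.mpr hd0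
  set A := (range d).filter (fun a => Nat.Coprime a d) with hAdef
  have hA : A ⊆ range d := filter_subset _ _
  have key := parseval hd0 A hA (fun a => Tfun b n ((a : ℝ) / (d : ℝ)))
  have key2 : ∑ h ∈ range d, (ffun b n (h : ℤ) d * (starRingEnd ℂ) (ffun b n (h : ℤ) d))
      = (d : ℂ) * ∑ a ∈ A, (Tfun b n ((a : ℝ) / (d : ℝ)) *
          (starRingEnd ℂ) (Tfun b n ((a : ℝ) / (d : ℝ)))) := by
    rw [← key]
    exact sum_congr rfl fun h _ => by rw [ffun_eq hd0]
  simp_rw [Complex.mul_conj] at key2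
  have key3 : (∑ h ∈ range d, Complex.normSq (ffun b n (h : ℤ) d) : ℝ)
      = (d : ℝ) * ∑ a ∈ A, Complex.normSq (Tfun b n ((a : ℝ) / (d : ℝ))) := by
    exact_mod_cast key2
  simp_rw [Complex.sq_norm]
  rw [key3, one_div, inv_mul_cancel_left₀ hdC]
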